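/- For every natural number N and reals h_1, ..., h_N in [0,1], one has the second-order Taylor identity for products: ∏_{i=1}^N (1 - h_i) = 1 - ∑_{i=1}^N h_i + ∑_{1 ≤ i, j ≤ N, i ≠ j} h_i h_j ∫_0^1 (1 - r) ∏_{k ≠ i, j} (1 - r h_k) dr, where the double sum ranges over ordered pairs (i,j) with i ≠ j and the product inside the integral ranges over all indices k in {1,...,N} \ {i,j}. -/

import Mathlib

open MeasureTheory Finset

/-- `tayF N h r = ∏ i (1 - r h i)`. -/
def tayF (N : ℕ) (h : Fin N → ℝ) (r : ℝ) : ℝ := ∏ i, (1 - r * h i)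

/-- First derivative of `tayF` in `r`. -/
def tayF1 (N : ℕ) (h : Fin N → ℝ) (r : ℝ) : ℝ :=
  ∑ i, (∏ k ∈ Finset.univ.erase i, (1 - r * h k)) * (-h i)

/-- Second derivative of `tayF` in `r`. -/
def tayF2 (N : ℕ) (h : Fin N → ℝ) (r : ℝ) : ℝ :=
  ∑ i, (∑ j ∈ Finset.univ.erase i,
    (∏ k ∈ (Finset.univ.erase i).erase j, (1 - r * h k)) * (-h j)) * (-h i)

/-- Antiderivative of `(1-r) * tayF2`. -/
def tayG (N : ℕ) (h : Fin N → ℝ) (r : ℝ) : ℝ := (1 - r) * tayF1 N h r + tayF N h r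

lemma tay_fac (N : ℕ) (h : Fin N → ℝ) (i : Fin N) (r : ℝ) :
    HasDerivAt (fun r => 1 - r * h i) (-h i) r := by
  simpa using ((hasDerivAt_id r).mul_const (h i)).const_sub 1

lemma tayF_hasDeriv (N : ℕ) (h : Fin N → ℝ) (r : ℝ) :
    HasDerivAt (tayF N h) (tayF1 N h r) r := by
  unfold tayF tayF1
  simpa using
    HasDerivAt.fun_finsetProd (u := Finset.univ) (f := fun i r => 1 - r * h i)
      (f' := fun i => -h i) (fun i _ => tay_fac N h i r)

lemma tayP_hasDeriv (N : ℕ) (h : Fin N → ℝ) (i : Fin N) (r : ℝ) :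
    HasDerivAt (fun r => ∏ k ∈ Finset.univ.erase i, (1 - r * h k))
      (∑ j ∈ Finset.univ.erase i,
        (∏ k ∈ (Finset.univ.erase i).erase j, (1 - r * h k)) * (-h j)) r := by
  simpa using
    HasDerivAt.fun_finsetProd (u := Finset.univ.erase i) (f := fun k r => 1 - r * h k)
      (f' := fun k => -h k) (fun k _ => tay_fac N h k r)

lemma tayF1_hasDeriv (N : ℕ) (h : Fin N → ℝ) (r : ℝ) :
    HasDerivAt (tayF1 N h) (tayF2 N h r) r := by
  unfold tayF1 tayF2
  exact HasDerivAt.fun_sum fun i _ => (tayP_hasDeriv N h i r).mul_const (-h i)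

lemma tayG_hasDeriv (N : ℕ) (h : Fin N → ℝ) (r : ℝ) :
    HasDerivAt (tayG N h) ((1 - r) * tayF2 N h r) r := by
  have h1 : HasDerivAt (fun r : ℝ => 1 - r) (-1) r := by
    simpa using (hasDerivAt_id r).const_sub 1
  have : HasDerivAt (tayG N h) (-1 * tayF1 N h r + (1 - r) * tayF2 N h r + tayF1 N h r) r :=
    (h1.mul (tayF1_hasDeriv N h r)).add (tayF_hasDeriv N h r)
  convert this using 1
  ring

lemma tay_swap {M : ℕ} (f : Fin M → ℝ → ℝ)
    (hf : ∀ i, IntervalIntegrable (f i) MeasureTheory.volume 0 1) :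
    ∑ i, ∫ r in (0:ℝ)..1, f i r = ∫ r in (0:ℝ)..1, ∑ i, f i r :=
  (intervalIntegral.integral_finset_sum fun i _ => hf i).symm

lemma tayF2_cont (N : ℕ) (h : Fin N → ℝ) : Continuous (tayF2 N h) := by
  unfold tayF2
  exact continuous_finset_sum _ fun i _ =>
    (continuous_finset_sum _ fun j _ =>
      (continuous_finset_prod _ fun k _ => by fun_prop).mul continuous_const).mul
      continuous_const

/-- Second-order Taylor identity for products: for `h i ∈ [0,1]`,
`∏ (1 - h i) = 1 - ∑ h i + ∑_{i ≠ j} h i h j ∫_0^1 (1-r) ∏_{k ≠ i,j} (1 - r h k) dr`. -/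
theorem product_second_order_taylor_identity (N : ℕ) (h : Fin N → ℝ)
    (hh : ∀ i, h i ∈ Set.Icc (0 : ℝ) 1) :
    ∏ i, (1 - h i) =
      1 - ∑ i, h i +
        ∑ i, ∑ j ∈ Finset.univ.erase i,
          h i * h j *
            ∫ r in (0:ℝ)..1, (1 - r) * ∏ k ∈ (Finset.univ.erase i).erase j, (1 - r * h k) := by
  classical
  have hcont : Continuous fun r => (1 - r) * tayF2 N h r :=
    (continuous_const.sub continuous_id).mul (tayF2_cont N h)
  have hFTC : (∫ r in (0:ℝ)..1, (1 - r) * tayF2 N h r) = tayG N h 1 - tayG N h 0 :=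
    intervalIntegral.integral_eq_sub_of_hasDerivAt (fun r _ => tayG_hasDeriv N h r)
      (hcont.intervalIntegrable 0 1)
  have hint : ∀ (i : Fin N) (j : Fin N), IntervalIntegrable
      (fun r => h i * h j * ((1 - r) * ∏ k ∈ (Finset.univ.erase i).erase j, (1 - r * h k)))
      volume 0 1 := by
    intro i j
    exact Continuous.intervalIntegrable (by
      exact continuous_const.mul ((continuous_const.sub continuous_id).mul
        (continuous_finset_prod _ fun k _ => by fun_prop))) 0 1
  have hRHS : (∑ i, ∑ j ∈ Finset.univ.erase i,
        h i * h j *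
          ∫ r in (0:ℝ)..1, (1 - r) * ∏ k ∈ (Finset.univ.erase i).erase j, (1 - r * h k))
      = ∫ r in (0:ℝ)..1, (1 - r) * tayF2 N h r := by
    have step1 : ∀ i : Fin N, (∑ j ∈ Finset.univ.erase i,
        h i * h j *
          ∫ r in (0:ℝ)..1, (1 - r) * ∏ k ∈ (Finset.univ.erase i).erase j, (1 - r * h k))
        = ∫ r in (0:ℝ)..1, ∑ j ∈ Finset.univ.erase i,
            h i * h j * ((1 - r) * ∏ k ∈ (Finset.univ.erase i).erase j, (1 - r * h k)) := by
      intro i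
      rw [intervalIntegral.integral_finset_sum (fun j _ => hint i j)]
      refine Finset.sum_congr rfl fun j _ => ?_
      rw [intervalIntegral.integral_const_mul]
    have hfun : (fun r : ℝ => ∑ i : Fin N, ∑ j ∈ Finset.univ.erase i,
          h i * h j * ((1 - r) * ∏ k ∈ (Finset.univ.erase i).erase j, (1 - r * h k)))
        = fun r => (1 - r) * tayF2 N h r := by
      funext r
      unfold tayF2
      rw [Finset.mul_sum]
      refine Finset.sum_congr rfl fun i _ => ?_
      rw [Finset.sum_mul, Finset.mul_sum]
      refine Finset.sum_congr rfl fun j _ => ?_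
      ring
    have hint2 : ∀ i : Fin N, IntervalIntegrable
        (fun r => ∑ j ∈ Finset.univ.erase i,
          h i * h j * ((1 - r) * ∏ k ∈ (Finset.univ.erase i).erase j, (1 - r * h k)))
        volume 0 1 := fun i =>
      Continuous.intervalIntegrable
        (continuous_finset_sum _ fun j _ =>
          continuous_const.mul ((continuous_const.sub continuous_id).mul
            (continuous_finset_prod _ fun k _ => by fun_prop))) 0 1
    rw [← hfun]
    rw [← tay_swap (fun i r => ∑ j ∈ Finset.univ.erase i,
        h i * h j * ((1 - r) * ∏ k ∈ (Finset.univ.erase i).erase j, (1 - r * h k))) hint2]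
    exact Finset.sum_congr rfl fun i _ => step1 i
  rw [hRHS, hFTC]
  have hG1 : tayG N h 1 = ∏ i, (1 - h i) := by
    simp [tayG, tayF]
  have hG0 : tayG N h 0 = 1 - ∑ i, h i := by
    simp only [tayG, tayF, tayF1]
    simp
    ring
  rw [hG1, hG0]
  ring
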